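/- Let p > 1 be a real number and ε > 0. Let a, b, c, d be real numbers with c ≥ 0 and d ≥ 0, and suppose that c = 0 whenever a ≤ ε and d = 0 whenever b ≤ ε. Then Φ_p((a − ε)⁺ − (b − ε)⁺)·(c − d) ≤ Φ_p(a − b)·(c − d). -/
import Mathlib


/-- `Φ_p(t) = |t|^{p-2} t`. -/
noncomputable def Phi (p t : ℝ) : ℝ := |t| ^ (p - 2) * t

lemma Phi_mono_nonneg (p : ℝ) (hp : 1 < p) {s t : ℝ} (hs : 0 ≤ s) (hst : s ≤ t) :
    Phi p s ≤ Phi p t := by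
  unfold Phi
  have ht : 0 ≤ t := hs.trans hst
  rw [abs_of_nonneg hs, abs_of_nonneg ht]
  rcases eq_or_lt_of_le hs with h0 | h0
  · rw [← h0]
    simp
    positivity
  · have ht' : 0 < t := h0.trans_le hst
    have e1 : s ^ (p - 2) * s = s ^ (p - 1) := by
      nth_rewrite 2 [show s = s ^ (1:ℝ) from (Real.rpow_one s).symm]
      rw [← Real.rpow_add h0]; ring_nf
    have e2 : t ^ (p - 2) * t = t ^ (p - 1) := by
      nth_rewrite 2 [show t = t ^ (1:ℝ) from (Real.rpow_one t).symm]
      rw [← Real.rpow_add ht']; ring_nf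
    rw [e1, e2]
    exact Real.rpow_le_rpow hs hst (by linarith)

lemma Phi_neg (p t : ℝ) : Phi p (-t) = -Phi p t := by
  unfold Phi; rw [abs_neg]; ring

lemma Phi_mono (p : ℝ) (hp : 1 < p) {s t : ℝ} (hst : s ≤ t) : Phi p s ≤ Phi p t := by
  rcases le_total 0 s with hs | hs
  · exact Phi_mono_nonneg p hp hs hst
  · rcases le_total t 0 with ht | ht
    · have := Phi_mono_nonneg p hp (neg_nonneg.mpr ht) (show -t ≤ -s by linarith)
      rw [Phi_neg, Phi_neg] at this; linarith
    · have h1 : Phi p s ≤ 0 := by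
        unfold Phi
        exact mul_nonpos_of_nonneg_of_nonpos (Real.rpow_nonneg (abs_nonneg _) _) hs
      have h2 : 0 ≤ Phi p t := by
        unfold Phi
        exact mul_nonneg (Real.rpow_nonneg (abs_nonneg _) _) ht
      linarith

/-- Pointwise inequality comparing the weak form of the fractional p-Laplacian of the
truncation `(u − ε)⁺` with that of `u`, against nonnegative test values supported in
`{u > ε}`. -/
theorem Phi_truncation_pointwise (p ε : ℝ) (hp : 1 < p) (hε : 0 < ε)
    (a b c d : ℝ) (hc : 0 ≤ c) (hd : 0 ≤ d)
    (hc0 : a ≤ ε → c = 0) (hd0 : b ≤ ε → d = 0) :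
    Phi p (max (a - ε) 0 - max (b - ε) 0) * (c - d) ≤ Phi p (a - b) * (c - d) := by
  rcases le_or_gt a ε with ha | ha
  · rcases le_or_gt b ε with hb | hb
    · rw [hc0 ha, hd0 hb]; simp
    · have hA : max (a - ε) 0 = 0 := max_eq_right (by linarith)
      have hB : max (b - ε) 0 = b - ε := max_eq_left (by linarith)
      rw [hA, hB, hc0 ha]
      have : Phi p (a - b) ≤ Phi p (0 - (b - ε)) := Phi_mono p hp (by linarith)
      nlinarith
  · rcases le_or_gt b ε with hb | hb
    · have hA : max (a - ε) 0 = a - ε := max_eq_left (by linarith)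
      have hB : max (b - ε) 0 = 0 := max_eq_right (by linarith)
      rw [hA, hB, hd0 hb]
      have : Phi p (a - ε - 0) ≤ Phi p (a - b) := Phi_mono p hp (by linarith)
      nlinarith
    · have hA : max (a - ε) 0 = a - ε := max_eq_left (by linarith)
      have hB : max (b - ε) 0 = b - ε := max_eq_left (by linarith)
      rw [hA, hB]
      have : a - ε - (b - ε) = a - b := by ring
      rw [this]
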